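/- Completeness of the payout coin verification argument: if (r, s) is a valid coin for the message vector 𝔐 ∈ ℤ^k, i.e., pk · e((∏ᵢ 𝔊ᵢ^{𝔐ᵢ})·h, s) = e(r, g₂), then for every B ∈ ℤ^k, every integer c, and every J ∈ G, setting E = e(J, g₂)·e(∏ᵢ 𝔊ᵢ^{Bᵢ}, s)⁻¹, Yᵢ = Bᵢ + c·𝔐ᵢ and z = r^c·J, the verification equation E · pk^c · e(h, s)^c = e(z, g₂) · e(∏ᵢ 𝔊ᵢ^{Yᵢ}, s)⁻¹ holds. -/
import Mathlib


/-- Completeness of the payout coin verification argument. -/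
theorem payout_coin_completeness
    {G G₂ GT : Type*} [CommGroup G] [CommGroup G₂] [CommGroup GT]
    (e : G → G₂ → GT)
    (e_left : ∀ x y z, e (x * y) z = e x z * e y z)
    (e_right : ∀ x z w, e x (z * w) = e x z * e x w)
    (h : G) (g₂ : G₂) {k : ℕ} (𝔊 : Fin k → G) (pk : GT)
    (𝔐 : Fin k → ℤ) (r : G) (s : G₂)
    (hcoin : pk * e ((∏ i, 𝔊 i ^ 𝔐 i) * h) s = e r g₂)
    (B : Fin k → ℤ) (c : ℤ) (J : G)
    (E : GT) (Y : Fin k → ℤ) (z : G)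
    (hE : E = e J g₂ * (e (∏ i, 𝔊 i ^ B i) s)⁻¹)
    (hY : ∀ i, Y i = B i + c * 𝔐 i)
    (hz : z = r ^ c * J) :
    E * pk ^ c * (e h s) ^ c = e z g₂ * (e (∏ i, 𝔊 i ^ Y i) s)⁻¹ := by
  have h1 : ∀ w, e 1 w = 1 := by
    intro w
    have := e_left 1 1 w
    rw [one_mul] at this
    exact (left_eq_mul.mp this)
  let f : G₂ → G →* GT := fun w =>
    { toFun := fun x => e x w
      map_one' := h1 w
      map_mul' := fun a b => e_left a b w }
  have hf : ∀ (x : G) (w : G₂) (n : ℤ), e (x ^ n) w = (e x w) ^ n :=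
    fun x w n => map_zpow (f w) x n
  have hprodY : (∏ i, 𝔊 i ^ Y i) = (∏ i, 𝔊 i ^ B i) * (∏ i, 𝔊 i ^ 𝔐 i) ^ c := by
    rw [← Finset.prod_zpow, ← Finset.prod_mul_distrib]
    refine Finset.prod_congr rfl fun i _ => ?_
    rw [hY i, zpow_add, mul_comm c, zpow_mul]
  have hr : e r g₂ = pk * e ((∏ i, 𝔊 i ^ 𝔐 i)) s * e h s := by
    rw [← hcoin, e_left, mul_assoc]
  rw [hE, hz, hprodY, e_left, hf, hr, e_left, hf, mul_zpow, mul_zpow, mul_inv]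
  simp [mul_comm, mul_left_comm, mul_assoc, inv_mul_cancel_left, mul_inv_cancel_left]
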